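/- Let W be a contraction on a complex Hilbert space H with Ker W = {0} and of class C_{·1}, and let U' be a unitary quasi-affine transform of W. Then the point spectra satisfy σ_p(U') = σ_p(W) ∩ C, where C is the unit circle. -/

import Mathlib

open Filter ContinuousLinearMap
open scoped InnerProductSpace

/-- If `W` is a contraction of class `C_{·1}` with trivial kernel and `U'`
is a unitary quasi-affine transform of `W`, then `σ_p(U') = σ_p(W) ∩ C`, where `C` is
the unit circle. -/
theorem point_spectrum_of_unitary_quasi_affine_transform
    {H H' : Type*}
    [NormedAddCommGroup H] [InnerProductSpace ℂ H] [CompleteSpace H]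
    [NormedAddCommGroup H'] [InnerProductSpace ℂ H'] [CompleteSpace H']
    (W : H →L[ℂ] H) (hW : ‖W‖ ≤ 1) (hker : LinearMap.ker (W : H →ₗ[ℂ] H) = ⊥)
    (hC1 : ∀ h : H, h ≠ 0 →
      ¬ Tendsto (fun n : ℕ => ((ContinuousLinearMap.adjoint W) ^ n) h) atTop (nhds 0))
    (U' : H' ≃ₗᵢ[ℂ] H')
    (Λ : H' →L[ℂ] H)
    (hΛinj : Function.Injective Λ) (hΛdense : Dense (Set.range Λ))
    (hint : ∀ x, W (Λ x) = Λ (U' x)) :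
    {z : ℂ | ∃ u : H', u ≠ 0 ∧ U' u = z • u} =
      {z : ℂ | ∃ h : H, h ≠ 0 ∧ W h = z • h} ∩ {z : ℂ | ‖z‖ = 1} := by
  ext z
  simp only [Set.mem_setOf_eq, Set.mem_inter_iff]
  constructor
  · rintro ⟨u, hu, huz⟩
    have hΛu : Λ u ≠ 0 := fun h0 => hu (hΛinj (by simpa using h0))
    refine ⟨⟨Λ u, hΛu, ?_⟩, ?_⟩
    · rw [hint, huz, map_smul]
    · have h1 : ‖U' u‖ = ‖u‖ := U'.norm_map u
      rw [huz, norm_smul] at h1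
      have hu' : ‖u‖ ≠ 0 := norm_ne_zero_iff.mpr hu
      have : ‖z‖ = 1 := by
        have := mul_right_cancel₀ hu' (h1.trans (one_mul ‖u‖).symm)
        exact this
      simpa using this
  · rintro ⟨⟨h, hh, hWh⟩, hz⟩
    have hz1 : z * (starRingEnd ℂ) z = 1 := by
      rw [Complex.mul_conj]
      norm_cast
      simp [Complex.normSq_eq_norm_sq, hz]
    -- Step 1 : W* h = conj z • h
    have hnormW : ‖(adjoint W) h‖ ≤ ‖h‖ := by
      calc ‖(adjoint W) h‖ ≤ ‖adjoint W‖ * ‖h‖ := le_opNorm _ _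
        _ ≤ 1 * ‖h‖ := by
            gcongr
            rw [show ‖adjoint W‖ = ‖W‖ from
              (ContinuousLinearMap.adjoint : (H →L[ℂ] H) ≃ₗᵢ⋆[ℂ] (H →L[ℂ] H)).norm_map W]
            exact hW
        _ = ‖h‖ := one_mul _
    have hinner : ⟪(adjoint W) h, ((starRingEnd ℂ) z) • h⟫_ℂ = (‖h‖ : ℂ) ^ 2 := by
      rw [inner_smul_right, adjoint_inner_left, hWh, inner_smul_right, ← mul_assoc,
        mul_comm ((starRingEnd ℂ) z) z, hz1, one_mul, inner_self_eq_norm_sq_to_K]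
      norm_cast
    have hzn : ‖((starRingEnd ℂ) z) • h‖ = ‖h‖ := by
      rw [norm_smul]
      simp [hz]
    have hsq : ‖(adjoint W) h - ((starRingEnd ℂ) z) • h‖ ^ 2 ≤ 0 := by
      rw [@norm_sub_sq ℂ, hinner, hzn]
      have hre : RCLike.re ((‖h‖ : ℂ) ^ 2) = ‖h‖ ^ 2 := by
        norm_cast
      rw [hre]
      have : ‖(adjoint W) h‖ ^ 2 ≤ ‖h‖ ^ 2 := by
        gcongr <;> positivity
      nlinarith
    have hWadj : (adjoint W) h = ((starRingEnd ℂ) z) • h := by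
      have := le_antisymm hsq (sq_nonneg _)
      have hn : ‖(adjoint W) h - ((starRingEnd ℂ) z) • h‖ = 0 := by
        nlinarith [norm_nonneg ((adjoint W) h - ((starRingEnd ℂ) z) • h)]
      exact sub_eq_zero.mp (norm_eq_zero.mp hn)
    -- Step 2 : Λ* h ≠ 0
    have hune : (adjoint Λ) h ≠ 0 := by
      intro h0
      apply hh
      have hz0 : ∀ x : H, ⟪h, x⟫_ℂ = 0 := by
        have hsub : Set.range Λ ⊆ {x : H | ⟪h, x⟫_ℂ = 0} := by
          rintro _ ⟨y, rfl⟩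
          show ⟪h, Λ y⟫_ℂ = 0
          rw [← adjoint_inner_left, h0, inner_zero_left]
        have hclosed : IsClosed {x : H | ⟪h, x⟫_ℂ = 0} :=
          isClosed_eq (Continuous.inner continuous_const continuous_id) continuous_const
        intro x
        exact hclosed.closure_subset_iff.mpr hsub (hΛdense x)
      exact inner_self_eq_zero.mp (hz0 h)
    -- Step 3 : intertwining of adjoints at h
    have hkey : U'.symm ((adjoint Λ) h) = (adjoint Λ) ((adjoint W) h) := by
      apply ext_inner_left ℂ
      intro v
      calc ⟪v, U'.symm ((adjoint Λ) h)⟫_ℂ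
          = ⟪U' v, U' (U'.symm ((adjoint Λ) h))⟫_ℂ := (U'.inner_map_map _ _).symm
        _ = ⟪U' v, (adjoint Λ) h⟫_ℂ := by rw [U'.apply_symm_apply]
        _ = ⟪Λ (U' v), h⟫_ℂ := adjoint_inner_right _ _ _
        _ = ⟪W (Λ v), h⟫_ℂ := by rw [hint]
        _ = ⟪Λ v, (adjoint W) h⟫_ℂ := (adjoint_inner_right _ _ _).symm
        _ = ⟪v, (adjoint Λ) ((adjoint W) h)⟫_ℂ := (adjoint_inner_right _ _ _).symm
    -- Step 4 : conclude
    refine ⟨(adjoint Λ) h, hune, ?_⟩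
    have hsymm : U'.symm ((adjoint Λ) h) = ((starRingEnd ℂ) z) • (adjoint Λ) h := by
      rw [hkey, hWadj, map_smul]
    have h5 : (adjoint Λ) h = ((starRingEnd ℂ) z) • U' ((adjoint Λ) h) := by
      conv_lhs => rw [← U'.apply_symm_apply ((adjoint Λ) h), hsymm, map_smul]
    calc U' ((adjoint Λ) h)
        = (z * (starRingEnd ℂ) z) • U' ((adjoint Λ) h) := by rw [hz1, one_smul]
      _ = z • (((starRingEnd ℂ) z) • U' ((adjoint Λ) h)) := mul_smul _ _ _
      _ = z • (adjoint Λ) h := by rw [← h5]
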